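/- Let R be a binary tree with no computable path. Then there is no model of the L-theory T_R with underlying set ℕ in which the interpretations of S and P are computable functions ℕ → ℕ and the interpretation of A is a computable (decidable) predicate on ℕ. -/

import Mathlib

open FirstOrder FirstOrder.Language

/-- The function symbols of the language `L`: a constant `0` and unary functions `S`, `P`. -/
inductive LFunc : ℕ → Type
  | zero : LFunc 0
  | succ : LFunc 1
  | pred : LFunc 1

/-- The relation symbols of the language `L`: a unary relation `A`. -/
inductive LRel : ℕ → Type
  | A : LRel 1

/-- The first-order language with a constant symbol `0`, unary function symbols `S` and `P`,
and a unary relation symbol `A`. -/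
def L : Language := ⟨LFunc, LRel⟩

/-- The reduct `L₀` of `L` without the relation symbol `A`. -/
def L₀ : Language := ⟨LFunc, fun _ => Empty⟩

/-- The inclusion of `L₀` into `L`. -/
def incl : L₀ →ᴸ L where
  onFunction := fun {_} f => f
  onRelation := fun {_} r => Empty.elim r

/-- `ℤ` as an `L₀`-structure, interpreting `0` as zero, `S` as successor, `P` as predecessor. -/
instance intL0Structure : L₀.Structure ℤ where
  funMap := fun f v => match f with
    | .zero => 0
    | .succ => v 0 + 1
    | .pred => v 0 - 1
  RelMap := fun r _ => Empty.elim r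

/-- The `L`-term `0`. -/
def zeroT {α : Type*} : L.Term α := Term.func LFunc.zero ![]

/-- The `L`-term `S t`. -/
def succT {α : Type*} (t : L.Term α) : L.Term α := Term.func LFunc.succ ![t]

/-- The `L`-term `P t`. -/
def predT {α : Type*} (t : L.Term α) : L.Term α := Term.func LFunc.pred ![t]

/-- The `L`-term `Sᵏ t`. -/
def iterST {α : Type*} (k : ℕ) (t : L.Term α) : L.Term α := succT^[k] t

/-- The `L`-term `Pᵏ t`. -/
def iterPT {α : Type*} (k : ℕ) (t : L.Term α) : L.Term α := predT^[k] t

/-- The atomic `L`-formula `A t`. -/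
def Aform {α : Type*} (t : L.Term α) : L.Formula α := Relations.formula LRel.A ![t]

/-- The old (2024) Mathlib `BoundedFormula.iSup`: disjunction of a finset-indexed family. -/
noncomputable def finsetISup {L : Language} {α : Type*} {β : Type*} {n : ℕ} (s : Finset β)
    (f : β → L.BoundedFormula α n) : L.BoundedFormula α n :=
  (s.toList.map f).foldr (· ⊔ ·) ⊥

/-- The old (2024) Mathlib `BoundedFormula.iInf`: conjunction of a finset-indexed family. -/
noncomputable def finsetIInf {L : Language} {α : Type*} {β : Type*} {n : ℕ} (s : Finset β)
    (f : β → L.BoundedFormula α n) : L.BoundedFormula α n :=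
  (s.toList.map f).foldr (· ⊓ ·) ⊤

/-- The sentence asserting that the truth values of `A(0), A(S0), …, A(Sⁿ⁻¹0)` follow the
pattern `σ`. -/
noncomputable def patternSentence (n : ℕ) (σ : Fin n → Bool) : L.Sentence :=
  finsetIInf Finset.univ fun i : Fin n =>
    if σ i then Aform (iterST i zeroT) else (Aform (iterST i zeroT)).not

/-- The `n`-th tree axiom for `R`: the disjunction, over all length-`n` strings `σ ∈ R`, of
the sentence asserting that `A(0), …, A(Sⁿ⁻¹0)` follow the pattern `σ`. -/
noncomputable def treeAxiom (R : Set (List Bool)) (n : ℕ) : L.Sentence :=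
  letI := Classical.decPred fun σ : Fin n → Bool => List.ofFn σ ∈ R
  finsetISup (Finset.univ.filter fun σ : Fin n → Bool => List.ofFn σ ∈ R)
    (patternSentence n)

/-- The theory `T_R`: all `L₀`-sentences true in `(ℤ, 0, succ, pred)`, together with the
tree axioms for `R`. -/
noncomputable def TR (R : Set (List Bool)) : L.Theory :=
  incl.onTheory (L₀.completeTheory ℤ) ∪ Set.range (treeAxiom R)

/-- `R ⊆ List Bool` is a binary tree if it is closed under initial segments. -/
def IsBinaryTree (R : Set (List Bool)) : Prop :=
  ∀ σ ∈ R, ∀ τ : List Bool, τ <+: σ → τ ∈ R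

/-- The length-`n` initial segment of an infinite binary sequence `x : ℕ → Bool`. -/
def initSeg (x : ℕ → Bool) (n : ℕ) : List Bool :=
  List.ofFn fun i : Fin n => x i

/-- The `L`-structure on `M` determined by interpretations `z` of `0`, `s` of `S`, `p` of `P`
and `a` of `A`. -/
def mkStructure {M : Type*} (z : M) (s p : M → M) (a : M → Prop) : L.Structure M where
  funMap := fun f v => match f with
    | .zero => z
    | .succ => s (v 0)
    | .pred => p (v 0)
  RelMap := fun r v => match r with
    | .A => a (v 0)

theorem finsetISup_realize {L' : Language} {M : Type*} [L'.Structure M] {α β : Type*} {n : ℕ}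
    (s : Finset β) (f : β → L'.BoundedFormula α n) (v : α → M) (xs : Fin n → M) :
    (finsetISup s f).Realize v xs ↔ ∃ b ∈ s, (f b).Realize v xs := by
  have h : ∀ l : List (L'.BoundedFormula α n),
      (l.foldr (· ⊔ ·) ⊥).Realize v xs ↔ ∃ φ ∈ l, φ.Realize v xs := by
    intro l
    induction l with
    | nil => simp [BoundedFormula.realize_bot]
    | cons a l ih => simp [BoundedFormula.realize_sup, ih]
  unfold finsetISup
  rw [h]
  simp

theorem finsetIInf_realize {L' : Language} {M : Type*} [L'.Structure M] {α β : Type*} {n : ℕ}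
    (s : Finset β) (f : β → L'.BoundedFormula α n) (v : α → M) (xs : Fin n → M) :
    (finsetIInf s f).Realize v xs ↔ ∀ b ∈ s, (f b).Realize v xs := by
  have h : ∀ l : List (L'.BoundedFormula α n),
      (l.foldr (· ⊓ ·) ⊤).Realize v xs ↔ ∀ φ ∈ l, φ.Realize v xs := by
    intro l
    induction l with
    | nil => simp [BoundedFormula.realize_top]
    | cons a l ih => simp [BoundedFormula.realize_inf, ih]
  unfold finsetIInf
  rw [h]
  simp

/-- If `R` is a binary tree with no computable path, then there is no model of `T_R` with
underlying set `ℕ` in which the interpretations of `S` and `P` are computable functions and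
the interpretation of `A` is a computable predicate. -/
theorem no_computable_model_TR (R : Set (List Bool)) (hTree : IsBinaryTree R)
    (hNoPath : ∀ x : ℕ → Bool, (∀ n : ℕ, initSeg x n ∈ R) → ¬ Computable x) :
    ¬ ∃ (z : ℕ) (s p : ℕ → ℕ) (a : ℕ → Bool), Computable s ∧ Computable p ∧ Computable a ∧
      @Theory.Model L ℕ (mkStructure z s p fun m => a m = true) (TR R) := by
  rintro ⟨z, s, p, a, hs, hp, ha, hM⟩
  letI St : L.Structure ℕ := mkStructure z s p fun m => a m = true
  -- the candidate path
  set x : ℕ → Bool := fun n => a (s^[n] z) with hx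
  have hxcomp : Computable x := by
    have hiter : Computable fun n : ℕ => s^[n] z := by
      have := Computable.nat_rec (Computable.id) (Computable.const z)
        ((hs.comp (Computable.snd.comp Computable.snd)).to₂)
      refine this.of_eq fun n => ?_
      induction n with
      | zero => rfl
      | succ k ih =>
        simp only [Function.iterate_succ_apply']
        exact congrArg s ih
    exact ha.comp hiter
  -- realization of iterated successor terms
  have hsucc : ∀ (v : Empty → ℕ) (t : L.Term Empty),
      Term.realize (M := ℕ) v (succT t) = s (Term.realize v t) := fun _ _ => rfl
  have hterm : ∀ (v : Empty → ℕ) (k : ℕ),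
      Term.realize (M := ℕ) v (iterST k (zeroT (α := Empty))) = s^[k] z := by
    intro v k
    induction k with
    | zero => rfl
    | succ m ih =>
      rw [iterST, Function.iterate_succ_apply', Function.iterate_succ_apply' s,
        hsucc v (succT^[m] (zeroT (α := Empty)))]
      exact congrArg s ih
  have hpath : ∀ n : ℕ, initSeg x n ∈ R := by
    intro n
    have hax : Sentence.Realize ℕ (treeAxiom R n) :=
      hM.realize_of_mem _ (Or.inr ⟨n, rfl⟩)
    classical
    unfold treeAxiom Sentence.Realize Formula.Realize at hax
    have hax' := (finsetISup_realize _ _ _ _).1 hax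
    obtain ⟨σ, hσmem, hσreal⟩ := hax'
    have hσR : List.ofFn σ ∈ R := (Finset.mem_filter.1 hσmem).2
    have hpat := (finsetIInf_realize _ _ _ _).1 hσreal
    have hxi : ∀ i : Fin n, x i = σ i := by
      intro i
      have hi := hpat i (Finset.mem_univ i)
      have key : ∀ (v : Empty → ℕ) (xs : Fin 0 → ℕ),
          BoundedFormula.Realize (M := ℕ)
            (Aform (iterST (i : ℕ) (zeroT (α := Empty)))) v xs
          ↔ a (s^[(i : ℕ)] z) = true := by
        intro v xs
        show (a (Term.realize (Sum.elim v xs)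
          ((iterST (i : ℕ) (zeroT (α := Empty))).relabel Sum.inl)) = true) ↔ _
        rw [Term.realize_relabel, hterm]
      by_cases hb : σ i
      · rw [hb] at hi
        rw [if_pos rfl] at hi
        have := (key _ _).1 hi
        simp only [hx]
        rw [this, hb]
      · rw [Bool.not_eq_true] at hb
        rw [hb] at hi
        rw [if_neg Bool.false_ne_true] at hi
        rw [BoundedFormula.realize_not] at hi
        have := ((key _ _).not).1 hi
        simp only [hx]
        rw [Bool.not_eq_true] at this
        rw [this, hb]
    have : initSeg x n = List.ofFn σ := by
      unfold initSeg
      congr 1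
      funext i
      exact hxi i
    rw [this]; exact hσR
  exact hNoPath x hpath hxcomp
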